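/- For each n ∈ ℕ there exists a decomposable NNF (DNNF) circuit of size 2^{O(n)} over the variables {x_{i,j} : 1 ≤ i < j ≤ n} whose set of satisfying assignments equals the set of models of lin_n. -/

import Mathlib

/-- Labels of nodes in an NNF circuit: Boolean constants, literals (a variable
with a polarity), conjunction, and disjunction. -/
inductive CLabel (V : Type*) where
  | const (b : Bool)
  | lit (v : V) (b : Bool)
  | and
  | or
deriving DecidableEq

/-- A Boolean circuit in negation normal form, given as a DAG: nodes are
`Fin size`, each node has a label and a list of children, and every edge goes
to a node with a strictly smaller index (this guarantees acyclicity).  The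
node `root` is the (distinguished) root of the circuit. -/
structure Circuit (V : Type*) where
  size : ℕ
  label : Fin size → CLabel V
  children : Fin size → List (Fin size)
  hwf : ∀ i : Fin size, ∀ j ∈ children i, (j : ℕ) < (i : ℕ)
  root : Fin size

namespace Circuit

variable {V : Type*}

/-- The truth value computed at node `i` of the circuit under assignment `α`. -/
def eval (C : Circuit V) (α : V → Bool) (i : Fin C.size) : Bool :=
  match C.label i with
  | .const b => b
  | .lit v b => α v == b
  | .and => (C.children i).attach.all (fun j => C.eval α j.1)
  | .or => (C.children i).attach.any (fun j => C.eval α j.1)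
termination_by (i : ℕ)
decreasing_by all_goals exact C.hwf i j.1 j.2

variable [DecidableEq V]

/-- The set of variables occurring in the subcircuit rooted at node `i`. -/
def vars (C : Circuit V) (i : Fin C.size) : Finset V :=
  match C.label i with
  | .const _ => ∅
  | .lit v _ => {v}
  | .and => ((C.children i).attach.map (fun j => C.vars j.1)).foldr (· ∪ ·) ∅
  | .or => ((C.children i).attach.map (fun j => C.vars j.1)).foldr (· ∪ ·) ∅
termination_by (i : ℕ)
decreasing_by all_goals exact C.hwf i j.1 j.2

/-- A circuit is decomposable (a DNNF circuit) if for every ∧-node the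
variable sets of (the subcircuits rooted at) its children are pairwise
disjoint. -/
def Decomposable (C : Circuit V) : Prop :=
  ∀ i : Fin C.size, C.label i = .and →
    (C.children i).Pairwise (fun j k => Disjoint (C.vars j) (C.vars k))

end Circuit

/-- A linear order on `Fin n`, encoded as a Boolean relation that is
irreflexive, transitive, and complete (total on distinct elements). -/
def IsLinOrder {n : ℕ} (r : Fin n → Fin n → Bool) : Prop :=
  (∀ a, r a a = false) ∧
  (∀ a b c, r a b = true → r b c = true → r a c = true) ∧
  (∀ a b, a ≠ b → r a b = true ∨ r b a = true)

/-- The variables `x_{i,j}` for `1 ≤ i < j ≤ n` of the function `lin_n`. -/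
abbrev Vars (n : ℕ) := {p : Fin n × Fin n // p.1 < p.2}

/-- An assignment `α` is a model of `lin_n` iff there is a linear order `r`
on `Fin n` with `α x_{i,j} = true ↔ i ≺ j` for all `i < j`. -/
def satLin (n : ℕ) (α : Vars n → Bool) : Prop :=
  ∃ r : Fin n → Fin n → Bool, IsLinOrder r ∧ ∀ p : Vars n, α p = r p.1.1 p.1.2

namespace LinDNNF

open Finset

/-- Node descriptors for the DNNF circuit for `lin_n`. -/
inductive D (n : ℕ) : Type where
  | lit (p : Vars n) (b : Bool)
  | conj (S : Finset (Fin n)) (i : Fin n)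
  | disj (S : Finset (Fin n))

variable (n : ℕ)

noncomputable def enc (S : Finset (Fin n)) : ℕ := ((Fintype.equivFin (Finset (Fin n))) S : ℕ)

lemma enc_lt (S : Finset (Fin n)) : enc n S < 2 ^ n := by
  have h := ((Fintype.equivFin (Finset (Fin n))) S).isLt
  simpa [enc, Fintype.card_finset, Fintype.card_fin] using h

lemma enc_inj : Function.Injective (enc n) := fun S T h =>
  (Fintype.equivFin (Finset (Fin n))).injective (Fin.val_injective h)

noncomputable def key (S : Finset (Fin n)) : ℕ := S.card * 2 ^ n + enc n S

lemma key_lt (S : Finset (Fin n)) : key n S < (n + 1) * 2 ^ n := by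
  have h1 : S.card ≤ n := by simpa using Finset.card_le_card (Finset.subset_univ S)
  have h2 := enc_lt n S
  have : S.card * 2 ^ n ≤ n * 2 ^ n := Nat.mul_le_mul_right _ h1
  calc key n S < S.card * 2 ^ n + 2 ^ n := Nat.add_lt_add_left h2 _
    _ ≤ n * 2 ^ n + 2 ^ n := Nat.add_le_add_right this _
    _ = (n + 1) * 2 ^ n := by ring

lemma key_inj : Function.Injective (key n) := by
  intro S T h
  have hS := enc_lt n S
  have hT := enc_lt n T
  have hcard : S.card = T.card := by
    by_contra hne
    rcases Nat.lt_or_ge S.card T.card with hlt | hge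
    · have : key n S < key n T := by
        unfold key
        calc S.card * 2 ^ n + enc n S < S.card * 2 ^ n + 2 ^ n := Nat.add_lt_add_left hS _
          _ = (S.card + 1) * 2 ^ n := by ring
          _ ≤ T.card * 2 ^ n := Nat.mul_le_mul_right _ hlt
          _ ≤ T.card * 2 ^ n + enc n T := Nat.le_add_right _ _
      omega
    · have hlt : T.card < S.card := lt_of_le_of_ne hge (fun e => hne e.symm)
      have : key n T < key n S := by
        unfold key
        calc T.card * 2 ^ n + enc n T < T.card * 2 ^ n + 2 ^ n := Nat.add_lt_add_left hT _
          _ = (T.card + 1) * 2 ^ n := by ring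
          _ ≤ S.card * 2 ^ n := Nat.mul_le_mul_right _ hlt
          _ ≤ S.card * 2 ^ n + enc n S := Nat.le_add_right _ _
      omega
  have : enc n S = enc n T := by unfold key at h; rw [hcard] at h; omega
  exact enc_inj n this

lemma key_erase_lt {S : Finset (Fin n)} {i : Fin n} (h : i ∈ S) :
    key n (S.erase i) < key n S := by
  have hc : (S.erase i).card = S.card - 1 := Finset.card_erase_of_mem h
  have hpos : 1 ≤ S.card := Finset.card_pos.2 ⟨i, h⟩
  have he := enc_lt n (S.erase i)
  unfold key
  calc (S.erase i).card * 2 ^ n + enc n (S.erase i)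
      < (S.erase i).card * 2 ^ n + 2 ^ n := Nat.add_lt_add_left he _
    _ = ((S.erase i).card + 1) * 2 ^ n := by ring
    _ ≤ S.card * 2 ^ n := by
        apply Nat.mul_le_mul_right
        omega
    _ ≤ S.card * 2 ^ n + enc n S := Nat.le_add_right _ _

noncomputable def rank : D n → ℕ
  | .lit p b => 2 * ((p.1.1 : ℕ) * n + (p.1.2 : ℕ)) + b.toNat
  | .conj S i => 2 * n ^ 2 + (key n S) * (n + 1) + (i : ℕ)
  | .disj S => 2 * n ^ 2 + (key n S) * (n + 1) + n

noncomputable def csize : ℕ := 2 * n ^ 2 + (n + 1) ^ 2 * 2 ^ n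

lemma rank_lit_lt (p : Vars n) (b : Bool) : rank n (.lit p b) < 2 * n ^ 2 := by
  have h1 : (p.1.1 : ℕ) < n := p.1.1.isLt
  have h2 : (p.1.2 : ℕ) < n := p.1.2.isLt
  have h3 : (p.1.1 : ℕ) * n + (p.1.2 : ℕ) < n * n := by
    calc (p.1.1 : ℕ) * n + (p.1.2 : ℕ) < (p.1.1 : ℕ) * n + n := Nat.add_lt_add_left h2 _
      _ = ((p.1.1 : ℕ) + 1) * n := by ring
      _ ≤ n * n := Nat.mul_le_mul_right _ h1
  have hb : (b.toNat) ≤ 1 := Bool.toNat_le b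
  have : rank n (.lit p b) = 2 * ((p.1.1 : ℕ) * n + (p.1.2 : ℕ)) + b.toNat := rfl
  rw [this]
  have : n ^ 2 = n * n := sq n
  omega

lemma key_mul_lt (S : Finset (Fin n)) (r : ℕ) (hr : r ≤ n) :
    key n S * (n + 1) + r < (n + 1) ^ 2 * 2 ^ n := by
  have h := key_lt n S
  have : key n S * (n + 1) + r < (key n S + 1) * (n + 1) := by
    have : r < n + 1 := by omega
    calc key n S * (n + 1) + r < key n S * (n + 1) + (n + 1) := Nat.add_lt_add_left this _
      _ = (key n S + 1) * (n + 1) := by ring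
  calc key n S * (n + 1) + r < (key n S + 1) * (n + 1) := this
    _ ≤ ((n + 1) * 2 ^ n) * (n + 1) := Nat.mul_le_mul_right _ (by omega)
    _ = (n + 1) ^ 2 * 2 ^ n := by ring

lemma rank_lt (d : D n) : rank n d < csize n := by
  cases d with
  | lit p b =>
      have := rank_lit_lt n p b
      have hp : 0 < (n + 1) ^ 2 * 2 ^ n := by positivity
      unfold csize; omega
  | conj S i =>
      have := key_mul_lt n S i (Nat.le_of_lt i.isLt)
      show 2 * n ^ 2 + key n S * (n + 1) + (i : ℕ) < csize n
      unfold csize; omega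
  | disj S =>
      have := key_mul_lt n S n le_rfl
      show 2 * n ^ 2 + key n S * (n + 1) + n < csize n
      unfold csize; omega

lemma addMul_inj {m a b r s : ℕ} (hr : r < m) (hs : s < m)
    (h : a * m + r = b * m + s) : a = b ∧ r = s := by
  have ha : (a * m + r) / m = a := by
    rw [Nat.mul_comm a m, Nat.mul_add_div (by omega)]
    simp [Nat.div_eq_of_lt hr]
  have hb : (b * m + s) / m = b := by
    rw [Nat.mul_comm b m, Nat.mul_add_div (by omega)]
    simp [Nat.div_eq_of_lt hs]
  have hab : a = b := by rw [← ha, ← hb, h]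
  subst hab
  exact ⟨rfl, by omega⟩

lemma rank_inj : Function.Injective (rank n) := by
  intro d e h
  cases d with
  | lit p b =>
      cases e with
      | lit q c =>
          have h' : 2 * ((p.1.1 : ℕ) * n + (p.1.2 : ℕ)) + b.toNat
              = 2 * ((q.1.1 : ℕ) * n + (q.1.2 : ℕ)) + c.toNat := h
          have hb : b.toNat ≤ 1 := Bool.toNat_le b
          have hc : c.toNat ≤ 1 := Bool.toNat_le c
          have hbc : b.toNat = c.toNat ∧
              (p.1.1 : ℕ) * n + (p.1.2 : ℕ) = (q.1.1 : ℕ) * n + (q.1.2 : ℕ) := by omega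
          have hb2 : b = c := by
            cases b <;> cases c <;> simp_all
          have := addMul_inj (m := n) p.1.2.isLt q.1.2.isLt hbc.2
          obtain ⟨h1, h2⟩ := this
          have hp : p = q := by
            apply Subtype.ext
            apply Prod.ext <;> exact Fin.ext (by assumption)
          rw [hp, hb2]
      | conj S i =>
          exfalso
          have h1 := rank_lit_lt n p b
          have : rank n (.conj S i) = 2 * n ^ 2 + key n S * (n + 1) + (i : ℕ) := rfl
          omega
      | disj S =>
          exfalso
          have h1 := rank_lit_lt n p b
          have : rank n (.disj S) = 2 * n ^ 2 + key n S * (n + 1) + n := rfl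
          omega
  | conj S i =>
      cases e with
      | lit q c =>
          exfalso
          have h1 := rank_lit_lt n q c
          have : rank n (.conj S i) = 2 * n ^ 2 + key n S * (n + 1) + (i : ℕ) := rfl
          omega
      | conj T j =>
          have h' : key n S * (n + 1) + (i : ℕ) = key n T * (n + 1) + (j : ℕ) := by
            have : 2 * n ^ 2 + (key n S * (n + 1) + (i : ℕ))
                = 2 * n ^ 2 + (key n T * (n + 1) + (j : ℕ)) := by
              have := h; simp only [rank] at this; omega
            omega
          obtain ⟨h1, h2⟩ := addMul_inj (by omega : (i : ℕ) < n + 1)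
            (by omega : (j : ℕ) < n + 1) h'
          rw [key_inj n h1, Fin.ext h2]
      | disj T =>
          exfalso
          have h' : key n S * (n + 1) + (i : ℕ) = key n T * (n + 1) + n := by
            have := h; simp only [rank] at this; omega
          obtain ⟨h1, h2⟩ := addMul_inj (by omega : (i : ℕ) < n + 1)
            (by omega : n < n + 1) h'
          exact absurd h2 (by have := i.isLt; omega)
  | disj S =>
      cases e with
      | lit q c =>
          exfalso
          have h1 := rank_lit_lt n q c
          have : rank n (.disj S) = 2 * n ^ 2 + key n S * (n + 1) + n := rfl
          omega
      | conj T j =>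
          exfalso
          have h' : key n S * (n + 1) + n = key n T * (n + 1) + (j : ℕ) := by
            have := h; simp only [rank] at this; omega
          obtain ⟨h1, h2⟩ := addMul_inj (by omega : n < n + 1)
            (by omega : (j : ℕ) < n + 1) h'
          exact absurd h2.symm (by have := j.isLt; omega)
      | disj T =>
          have h' : key n S * (n + 1) + n = key n T * (n + 1) + n := by
            have := h; simp only [rank] at this; omega
          obtain ⟨h1, _⟩ := addMul_inj (by omega : n < n + 1) (by omega : n < n + 1) h'
          rw [key_inj n h1]


/-- The literal node expressing that `i` precedes `j`. -/
def litD (i j : Fin n) : D n :=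
  if h : i < j then .lit ⟨(i, j), h⟩ true
  else if h' : j < i then .lit ⟨(j, i), h'⟩ false
  else .disj ∅

noncomputable def chl : D n → List (D n)
  | .lit _ _ => []
  | .conj S i =>
      if i ∈ S then ((S.erase i).toList.map (litD n i)) ++ [.disj (S.erase i)] else []
  | .disj S => if 2 ≤ S.card then S.toList.map (fun i => .conj S i) else []

noncomputable def lbl : D n → CLabel (Vars n)
  | .lit p b => .lit p b
  | .conj _ _ => .and
  | .disj S => if 2 ≤ S.card then .or else .const true

lemma litD_rank_lt (i j : Fin n) (hne : i ≠ j) (d : D n) :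
    2 * n ^ 2 ≤ rank n d → rank n (litD n i j) < rank n d := by
  intro hd
  have : ∃ p b, litD n i j = .lit p b := by
    rcases lt_trichotomy i j with h | h | h
    · exact ⟨⟨(i, j), h⟩, true, by simp [litD, h]⟩
    · exact absurd h hne
    · exact ⟨⟨(j, i), h⟩, false, by simp [litD, h, not_lt_of_gt h]⟩
  obtain ⟨p, b, hp⟩ := this
  rw [hp]
  exact lt_of_lt_of_le (rank_lit_lt n p b) hd

lemma chl_rank (d : D n) : ∀ d' ∈ chl n d, rank n d' < rank n d := by
  intro d' hd'
  cases d with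
  | lit p b => simp [chl] at hd'
  | conj S i =>
      by_cases hiS : i ∈ S
      · simp only [chl, if_pos hiS, List.mem_append, List.mem_map,
          List.mem_singleton] at hd'
        have hbase : 2 * n ^ 2 ≤ rank n (.conj S i) := by
          show 2 * n ^ 2 ≤ 2 * n ^ 2 + key n S * (n + 1) + (i : ℕ); omega
        rcases hd' with ⟨j, hj, rfl⟩ | rfl
        · have hji : i ≠ j := by
            have := Finset.mem_toList.1 hj
            exact fun e => (Finset.mem_erase.1 this).1 e.symm
          exact litD_rank_lt n i j hji _ hbase
        · show 2 * n ^ 2 + key n (S.erase i) * (n + 1) + n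
            < 2 * n ^ 2 + key n S * (n + 1) + (i : ℕ)
          have hk := key_erase_lt n hiS
          have : key n (S.erase i) * (n + 1) + n < key n S * (n + 1) := by
            calc key n (S.erase i) * (n + 1) + n
                < (key n (S.erase i) + 1) * (n + 1) := by rw [Nat.succ_mul]; omega
              _ ≤ key n S * (n + 1) := Nat.mul_le_mul_right _ (by omega)
          omega
      · simp [chl, hiS] at hd'
  | disj S =>
      by_cases h2 : 2 ≤ S.card
      · simp only [chl, if_pos h2, List.mem_map] at hd'
        obtain ⟨j, hj, rfl⟩ := hd'
        show 2 * n ^ 2 + key n S * (n + 1) + (j : ℕ)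
          < 2 * n ^ 2 + key n S * (n + 1) + n
        have := j.isLt
        omega
      · simp [chl, h2] at hd'

open Classical in
noncomputable def clabel (k : ℕ) : CLabel (Vars n) :=
  if h : ∃ d : D n, rank n d = k then lbl n h.choose else .const true

open Classical in
noncomputable def cch (k : ℕ) : List (D n) :=
  if h : ∃ d : D n, rank n d = k then chl n h.choose else []

lemma clabel_rank (d : D n) : clabel n (rank n d) = lbl n d := by
  unfold clabel
  have h : ∃ d' : D n, rank n d' = rank n d := ⟨d, rfl⟩
  rw [dif_pos h]
  congr 1
  exact rank_inj n h.choose_spec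

lemma cch_rank (d : D n) : cch n (rank n d) = chl n d := by
  unfold cch
  have h : ∃ d' : D n, rank n d' = rank n d := ⟨d, rfl⟩
  rw [dif_pos h]
  congr 1
  exact rank_inj n h.choose_spec

lemma cch_lt (k : ℕ) : ∀ d' ∈ cch n k, rank n d' < k := by
  intro d' hd'
  unfold cch at hd'
  split at hd'
  · next h => exact h.choose_spec ▸ chl_rank n _ d' hd'
  · simp at hd'

/-- The DNNF circuit for `lin_n`. -/
noncomputable def C : Circuit (Vars n) where
  size := csize n
  label := fun k => clabel n (k : ℕ)
  children := fun k => (cch n (k : ℕ)).map (fun d' => ⟨rank n d', rank_lt n d'⟩)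
  hwf := by
    intro i j hj
    simp only [List.mem_map] at hj
    obtain ⟨d', hd', rfl⟩ := hj
    exact cch_lt n _ d' hd'
  root := ⟨rank n (.disj Finset.univ), rank_lt n _⟩

/-- The node of the circuit corresponding to a descriptor. -/
noncomputable def nd (d : D n) : Fin (C n).size := ⟨rank n d, rank_lt n d⟩

lemma C_label (d : D n) : (C n).label (nd n d) = lbl n d := clabel_rank n d

lemma C_children (d : D n) :
    (C n).children (nd n d) = (chl n d).map (nd n) := by
  show (cch n (rank n d)).map _ = _
  rw [cch_rank]
  rfl



/-- The relation extracted from an assignment. -/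
def q (α : Vars n → Bool) (i j : Fin n) : Bool :=
  if h : i < j then α ⟨(i, j), h⟩ else if h' : j < i then !α ⟨(j, i), h'⟩ else false

variable {n}
variable (α : Vars n → Bool)

lemma q_irrefl (a : Fin n) : q n α a a = false := by simp [q]

lemma q_asymm {a b : Fin n} (h : q n α a b = true) : q n α b a = false := by
  rcases lt_trichotomy a b with hlt | heq | hgt
  · have h' : α ⟨(a, b), hlt⟩ = true := by rw [q, dif_pos hlt] at h; exact h
    rw [q, dif_neg (lt_asymm hlt), dif_pos hlt, h']
    rfl
  · subst heq; exact q_irrefl α a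
  · have h' : α ⟨(b, a), hgt⟩ = false := by
      rw [q, dif_neg (lt_asymm hgt), dif_pos hgt] at h
      simpa using h
    rw [q, dif_pos hgt, h']

lemma q_total {a b : Fin n} (h : a ≠ b) : q n α a b = true ∨ q n α b a = true := by
  rcases lt_trichotomy a b with hlt | heq | hgt
  · rw [q, dif_pos hlt, q, dif_neg (lt_asymm hlt), dif_pos hlt]
    cases hab : α ⟨(a, b), hlt⟩ <;> simp
  · exact absurd heq h
  · rw [q, dif_neg (lt_asymm hgt), dif_pos hgt, q, dif_pos hgt]
    cases hab : α ⟨(b, a), hgt⟩ <;> simp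

lemma q_ne {a b : Fin n} (h : q n α a b = true) : a ≠ b := by
  intro e; subst e; rw [q_irrefl] at h; exact absurd h (by simp)

/-- Evaluation of the node corresponding to a descriptor. -/
noncomputable def evalD (d : D n) : Bool := (C n).eval α (nd n d)

lemma eval_lit (p : Vars n) (b : Bool) : evalD α (.lit p b) = (α p == b) := by
  rw [evalD, Circuit.eval, C_label]
  rfl

lemma eval_litD {i j : Fin n} (hne : i ≠ j) :
    (evalD α (litD n i j) = true) ↔ q n α i j = true := by
  rcases lt_trichotomy i j with hlt | heq | hgt
  · rw [show litD n i j = .lit ⟨(i, j), hlt⟩ true by simp [litD, hlt]]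
    rw [eval_lit]
    rw [q, dif_pos hlt]
    cases α ⟨(i, j), hlt⟩ <;> simp
  · exact absurd heq hne
  · rw [show litD n i j = .lit ⟨(j, i), hgt⟩ false by
      simp [litD, hgt, not_lt_of_gt hgt]]
    rw [eval_lit]
    rw [q, dif_neg (lt_asymm hgt), dif_pos hgt]
    cases α ⟨(j, i), hgt⟩ <;> simp

lemma eval_conj {S : Finset (Fin n)} {i : Fin n} (hiS : i ∈ S) :
    (evalD α (.conj S i) = true) ↔
      ((∀ j ∈ S.erase i, q n α i j = true) ∧ evalD α (.disj (S.erase i)) = true) := by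
  rw [evalD, Circuit.eval, C_label]
  show ((C n).children (nd n (.conj S i))).attach.all _ = true ↔ _
  rw [C_children]
  simp only [chl, if_pos hiS, List.all_eq_true, List.mem_attach, true_implies,
    Subtype.forall, List.mem_map, List.mem_append, List.mem_singleton]
  constructor
  · intro h
    refine ⟨fun j hj => ?_, ?_⟩
    · have hne : i ≠ j := fun e => (Finset.mem_erase.1 hj).1 e.symm
      have := h (nd n (litD n i j)) ⟨litD n i j, Or.inl ⟨j, Finset.mem_toList.2 hj, rfl⟩, rfl⟩
      exact (eval_litD α hne).1 this
    · exact h (nd n (.disj (S.erase i))) ⟨_, Or.inr rfl, rfl⟩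
  · rintro ⟨h1, h2⟩ x ⟨d', hd', rfl⟩
    rcases hd' with ⟨j, hj, rfl⟩ | rfl
    · have hj' := Finset.mem_toList.1 hj
      have hne : i ≠ j := fun e => (Finset.mem_erase.1 hj').1 e.symm
      exact (eval_litD α hne).2 (h1 j hj')
    · exact h2

lemma eval_disj_small {S : Finset (Fin n)} (h2 : ¬ 2 ≤ S.card) :
    evalD α (.disj S) = true := by
  rw [evalD, Circuit.eval, C_label,
    show lbl n (.disj S) = .const true by simp [lbl, h2]]

lemma eval_disj_big {S : Finset (Fin n)} (h2 : 2 ≤ S.card) :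
    (evalD α (.disj S) = true) ↔ ∃ i ∈ S, evalD α (.conj S i) = true := by
  rw [evalD, Circuit.eval, C_label]
  rw [show lbl n (.disj S) = .or by simp [lbl, h2]]
  show ((C n).children (nd n (.disj S))).attach.any _ = true ↔ _
  rw [C_children]
  simp only [chl, if_pos h2, List.any_eq_true, List.mem_attach, true_and,
    Subtype.exists, List.mem_map, Finset.mem_toList]
  constructor
  · rintro ⟨x, ⟨d', ⟨i, hi, rfl⟩, rfl⟩, hx⟩
    exact ⟨i, hi, hx⟩
  · rintro ⟨i, hi, hx⟩
    exact ⟨nd n (.conj S i), ⟨_, ⟨i, hi, rfl⟩, rfl⟩, hx⟩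

/-- Transitivity of `q α` restricted to a finite set. -/
def TransOn (S : Finset (Fin n)) : Prop :=
  ∀ a ∈ S, ∀ b ∈ S, ∀ c ∈ S, q n α a b = true → q n α b c = true → q n α a c = true

lemma transOn_mono {S T : Finset (Fin n)} (h : S ⊆ T) (hT : TransOn α T) :
    TransOn α S := fun a ha b hb c hc => hT a (h ha) b (h hb) c (h hc)

lemma exists_min : ∀ S : Finset (Fin n), S.Nonempty → TransOn α S →
    ∃ i ∈ S, ∀ j ∈ S, j ≠ i → q n α i j = true := by
  intro S
  induction S using Finset.strongInduction with
  | _ S ih =>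
    intro hS hT
    obtain ⟨x, hx⟩ := hS
    rcases Finset.eq_empty_or_nonempty (S.erase x) with he | hne
    · refine ⟨x, hx, fun j hj hne => absurd ?_ (Finset.notMem_empty j)⟩
      rw [← he]; exact Finset.mem_erase.2 ⟨hne, hj⟩
    · obtain ⟨i', hi', hmin⟩ := ih (S.erase x) (Finset.erase_ssubset hx) hne
        (transOn_mono α (Finset.erase_subset _ _) hT)
      have hi'S : i' ∈ S := Finset.mem_of_mem_erase hi'
      have hi'x : i' ≠ x := (Finset.mem_erase.1 hi').1
      by_cases hq : q n α i' x = true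
      · refine ⟨i', hi'S, fun j hj hne' => ?_⟩
        by_cases hjx : j = x
        · subst hjx; exact hq
        · exact hmin j (Finset.mem_erase.2 ⟨hjx, hj⟩) hne'
      · have hxi' : q n α x i' = true := by
          rcases q_total α (Ne.symm hi'x) with h | h
          · exact h
          · exact absurd h hq
        refine ⟨x, hx, fun j hj hne' => ?_⟩
        have hjE : j ∈ S.erase x := Finset.mem_erase.2 ⟨hne', hj⟩
        by_cases hji' : j = i'
        · subst hji'; exact hxi'
        · exact hT x hx i' hi'S j hj hxi' (hmin j hjE hji')

lemma eval_disj_iff : ∀ S : Finset (Fin n), (evalD α (.disj S) = true ↔ TransOn α S) := by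
  intro S
  induction S using Finset.strongInduction with
  | _ S ih =>
    by_cases h2 : 2 ≤ S.card
    · rw [eval_disj_big α h2]
      constructor
      · rintro ⟨i, hiS, hci⟩
        rw [eval_conj α hiS] at hci
        obtain ⟨hlit, hrec⟩ := hci
        have hTe : TransOn α (S.erase i) :=
          (ih _ (Finset.erase_ssubset hiS)).1 hrec
        intro a ha b hb c hcS qab qbc
        by_cases hai : a = i
        · by_cases hci' : c = a
          · rw [hci'] at qbc
            rw [q_asymm α qab] at qbc
            exact absurd qbc (by simp)
          · rw [hai] at hci' ⊢
            exact hlit c (Finset.mem_erase.2 ⟨hci', hcS⟩)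
        · have hbi : b ≠ i := by
            intro e
            have hia := hlit a (Finset.mem_erase.2 ⟨hai, ha⟩)
            rw [e] at qab
            rw [q_asymm α hia] at qab
            exact absurd qab (by simp)
          have hci' : c ≠ i := by
            intro e
            have hib := hlit b (Finset.mem_erase.2 ⟨hbi, hb⟩)
            rw [e] at qbc
            rw [q_asymm α hib] at qbc
            exact absurd qbc (by simp)
          exact hTe a (Finset.mem_erase.2 ⟨hai, ha⟩) b (Finset.mem_erase.2 ⟨hbi, hb⟩)
            c (Finset.mem_erase.2 ⟨hci', hcS⟩) qab qbc
      · intro hT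
        have hS : S.Nonempty := Finset.card_pos.1 (by omega)
        obtain ⟨i, hiS, hmin⟩ := exists_min α S hS hT
        refine ⟨i, hiS, (eval_conj α hiS).2 ⟨?_, ?_⟩⟩
        · exact fun j hj => hmin j (Finset.mem_of_mem_erase hj) (Finset.mem_erase.1 hj).1
        · exact (ih _ (Finset.erase_ssubset hiS)).2
            (transOn_mono α (Finset.erase_subset _ _) hT)
    · constructor
      · intro _ a ha b hb c hc qab qbc
        have hab : a = b := Finset.card_le_one.1 (by omega) a ha b hb
        subst hab
        rw [q_irrefl] at qab
        exact absurd qab (by simp)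
      · intro _; exact eval_disj_small α h2

lemma transOn_univ_iff : TransOn α Finset.univ ↔ satLin n α := by
  constructor
  · intro hT
    refine ⟨q n α, ⟨q_irrefl α, ?_, fun a b h => q_total α h⟩, ?_⟩
    · intro a b c h1 h2
      exact hT a (Finset.mem_univ a) b (Finset.mem_univ b) c (Finset.mem_univ c) h1 h2
    · intro p
      rw [q, dif_pos p.2]
  · rintro ⟨r, ⟨hirr, htrans, htot⟩, hα⟩
    have hq : ∀ a b : Fin n, q n α a b = r a b := by
      intro a b
      rcases lt_trichotomy a b with hlt | heq | hgt
      · rw [q, dif_pos hlt]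
        exact hα ⟨(a, b), hlt⟩
      · subst heq; rw [q_irrefl, hirr]
      · rw [q, dif_neg (lt_asymm hgt), dif_pos hgt]
        have h1 : α ⟨(b, a), hgt⟩ = r b a := hα ⟨(b, a), hgt⟩
        rw [h1]
        have hne : a ≠ b := ne_of_gt hgt
        have hnab : ¬ (r a b = true ∧ r b a = true) := by
          rintro ⟨u, v⟩
          have := htrans a b a u v
          rw [hirr] at this
          exact absurd this (by simp)
        rcases htot a b hne with h | h
        · have hba : r b a = false := by
            cases hba : r b a
            · rfl
            · exact absurd ⟨h, hba⟩ hnab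
          rw [hba, h]
          rfl
        · have hab : r a b = false := by
            cases hab : r a b
            · rfl
            · exact absurd ⟨hab, h⟩ hnab
          rw [hab, h]
          rfl
    intro a _ b _ c _ h1 h2
    rw [hq] at h1 h2 ⊢
    exact htrans a b c h1 h2


lemma mem_foldr_union (l : List (Finset (Vars n))) (x : Vars n) :
    x ∈ l.foldr (· ∪ ·) ∅ ↔ ∃ s ∈ l, x ∈ s := by
  induction l with
  | nil => simp
  | cons a l ih => simp [ih]

lemma mem_vars_and {d : D n} (h : lbl n d = CLabel.and) (x : Vars n) :
    x ∈ (C n).vars (nd n d) ↔ ∃ d' ∈ chl n d, x ∈ (C n).vars (nd n d') := by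
  rw [Circuit.vars, C_label, h]
  show x ∈ (((C n).children (nd n d)).attach.map fun j => (C n).vars j.1).foldr (· ∪ ·) ∅ ↔ _
  rw [C_children, mem_foldr_union]
  constructor
  · rintro ⟨s, hs, hx⟩
    obtain ⟨⟨j, hj⟩, _, rfl⟩ := List.mem_map.1 hs
    obtain ⟨d', hd', rfl⟩ := List.mem_map.1 hj
    exact ⟨d', hd', hx⟩
  · rintro ⟨d', hd', hx⟩
    exact ⟨(C n).vars (nd n d'),
      List.mem_map.2 ⟨⟨nd n d', List.mem_map.2 ⟨d', hd', rfl⟩⟩, List.mem_attach _ _, rfl⟩, hx⟩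

lemma mem_vars_or {d : D n} (h : lbl n d = CLabel.or) (x : Vars n) :
    x ∈ (C n).vars (nd n d) ↔ ∃ d' ∈ chl n d, x ∈ (C n).vars (nd n d') := by
  rw [Circuit.vars, C_label, h]
  show x ∈ (((C n).children (nd n d)).attach.map fun j => (C n).vars j.1).foldr (· ∪ ·) ∅ ↔ _
  rw [C_children, mem_foldr_union]
  constructor
  · rintro ⟨s, hs, hx⟩
    obtain ⟨⟨j, hj⟩, _, rfl⟩ := List.mem_map.1 hs
    obtain ⟨d', hd', rfl⟩ := List.mem_map.1 hj
    exact ⟨d', hd', hx⟩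
  · rintro ⟨d', hd', hx⟩
    exact ⟨(C n).vars (nd n d'),
      List.mem_map.2 ⟨⟨nd n d', List.mem_map.2 ⟨d', hd', rfl⟩⟩, List.mem_attach _ _, rfl⟩, hx⟩

lemma vars_lit (p : Vars n) (b : Bool) : (C n).vars (nd n (.lit p b)) = {p} := by
  rw [Circuit.vars, C_label]
  rfl

/-- The variable of the literal node `litD i j`. -/
def pv (i j : Fin n) (h : i ≠ j) : Vars n :=
  if hij : i < j then ⟨(i, j), hij⟩ else ⟨(j, i), (Ne.lt_or_gt h).resolve_left hij⟩

lemma vars_litD {i j : Fin n} (h : i ≠ j) :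
    (C n).vars (nd n (litD n i j)) = {pv i j h} := by
  rcases lt_trichotomy i j with hlt | heq | hgt
  · rw [show litD n i j = .lit ⟨(i, j), hlt⟩ true by simp [litD, hlt], vars_lit,
      pv, dif_pos hlt]
  · exact absurd heq h
  · rw [show litD n i j = .lit ⟨(j, i), hgt⟩ false by
        simp [litD, hgt, not_lt_of_gt hgt], vars_lit, pv, dif_neg (lt_asymm hgt)]

lemma pv_comp (i j : Fin n) (h : i ≠ j) :
    ((pv i j h).1.1 = i ∧ (pv i j h).1.2 = j) ∨
      ((pv i j h).1.1 = j ∧ (pv i j h).1.2 = i) := by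
  unfold pv
  split
  · exact Or.inl ⟨rfl, rfl⟩
  · exact Or.inr ⟨rfl, rfl⟩

lemma pv_inj {i j j' : Fin n} (h : i ≠ j) (h' : i ≠ j')
    (e : pv i j h = pv i j' h') : j = j' := by
  have efst : (pv i j h).1.1 = (pv i j' h').1.1 := by rw [e]
  have esnd : (pv i j h).1.2 = (pv i j' h').1.2 := by rw [e]
  rcases pv_comp i j h with ⟨e1, e2⟩ | ⟨e1, e2⟩ <;>
    rcases pv_comp i j' h' with ⟨f1, f2⟩ | ⟨f1, f2⟩
  · rw [e2, f2] at esnd; exact esnd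
  · rw [e1, f1] at efst; exact absurd efst h'
  · rw [e1, f1] at efst; exact absurd efst.symm h
  · rw [e1, f1] at efst; exact efst

lemma vars_disj_sub : ∀ S : Finset (Fin n), ∀ p : Vars n,
    p ∈ (C n).vars (nd n (.disj S)) → p.1.1 ∈ S ∧ p.1.2 ∈ S := by
  intro S
  induction S using Finset.strongInduction with
  | _ S ih =>
    intro p hp
    by_cases h2 : 2 ≤ S.card
    · rw [mem_vars_or (show lbl n (.disj S) = .or by simp [lbl, h2])] at hp
      obtain ⟨d', hd', hp⟩ := hp
      simp only [chl, if_pos h2, List.mem_map] at hd'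
      obtain ⟨i, hi, rfl⟩ := hd'
      have hiS : i ∈ S := Finset.mem_toList.1 hi
      rw [mem_vars_and (show lbl n (.conj S i) = .and from rfl)] at hp
      obtain ⟨d'', hd'', hp⟩ := hp
      simp only [chl, if_pos hiS, List.mem_append, List.mem_map,
        List.mem_singleton] at hd''
      rcases hd'' with ⟨j, hj, rfl⟩ | rfl
      · have hjE := Finset.mem_toList.1 hj
        have hne : i ≠ j := fun e => (Finset.mem_erase.1 hjE).1 e.symm
        rw [vars_litD hne] at hp
        have hpv := Finset.mem_singleton.1 hp
        have hjS : j ∈ S := Finset.mem_of_mem_erase hjE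
        rcases pv_comp i j hne with ⟨e1, e2⟩ | ⟨e1, e2⟩
        · rw [hpv, e1, e2]; exact ⟨hiS, hjS⟩
        · rw [hpv, e1, e2]; exact ⟨hjS, hiS⟩
      · have := ih (S.erase i) (Finset.erase_ssubset hiS) p hp
        exact ⟨Finset.mem_of_mem_erase this.1, Finset.mem_of_mem_erase this.2⟩
    · rw [Circuit.vars, C_label,
        show lbl n (.disj S) = .const true by simp [lbl, h2]] at hp
      exact absurd hp (Finset.notMem_empty p)

lemma C_decomposable (n : ℕ) : (C n).Decomposable := by
  intro k hk
  by_cases h : ∃ d : D n, rank n d = (k : ℕ)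
  · obtain ⟨d, hd⟩ := h
    have hk' : k = nd n d := Fin.ext hd.symm
    subst hk'
    rw [C_label] at hk
    cases d with
    | lit p b => simp [lbl] at hk
    | disj S => by_cases h2 : 2 ≤ S.card <;> simp [lbl, h2] at hk
    | conj S i =>
      rw [C_children]
      by_cases hiS : i ∈ S
      · simp only [chl, if_pos hiS]
        rw [List.map_append, List.pairwise_append]
        refine ⟨?_, ?_, ?_⟩
        · rw [List.map_map, List.pairwise_map]
          refine List.Pairwise.imp_of_mem ?_ (Finset.nodup_toList (S.erase i))
          intro a b ha hb hab
          have hia : i ≠ a := fun e =>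
            (Finset.mem_erase.1 (Finset.mem_toList.1 ha)).1 e.symm
          have hib : i ≠ b := fun e =>
            (Finset.mem_erase.1 (Finset.mem_toList.1 hb)).1 e.symm
          show Disjoint ((C n).vars (nd n (litD n i a))) ((C n).vars (nd n (litD n i b)))
          rw [vars_litD hia, vars_litD hib, Finset.disjoint_singleton]
          exact fun e => hab (pv_inj hia hib e)
        · simp
        · intro x hx y hy
          rw [List.map_map] at hx
          obtain ⟨j, hj, rfl⟩ := List.mem_map.1 hx
          rw [List.mem_map] at hy
          obtain ⟨d', hd', rfl⟩ := hy
          rw [List.mem_singleton] at hd'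
          subst hd'
          have hjE := Finset.mem_toList.1 hj
          have hne : i ≠ j := fun e => (Finset.mem_erase.1 hjE).1 e.symm
          show Disjoint ((C n).vars (nd n (litD n i j))) _
          rw [vars_litD hne, Finset.disjoint_singleton_left]
          intro hpv
          have hmem := vars_disj_sub (S.erase i) _ hpv
          rcases pv_comp i j hne with ⟨e1, e2⟩ | ⟨e1, e2⟩
          · rw [e1] at hmem
            exact absurd hmem.1 (Finset.notMem_erase i S)
          · rw [e2] at hmem
            exact absurd hmem.2 (Finset.notMem_erase i S)
      · simp [chl, hiS]
  · have : (C n).label k = .const true := by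
      show clabel n k = _
      rw [clabel, dif_neg h]
    rw [this] at hk
    simp at hk

lemma C_correct (n : ℕ) (α : Vars n → Bool) :
    ((C n).eval α (C n).root = true) ↔ satLin n α := by
  have hroot : (C n).eval α (C n).root = evalD α (.disj Finset.univ) := rfl
  rw [hroot, eval_disj_iff, transOn_univ_iff]

lemma C_size (n : ℕ) : (C n).size ≤ 16 * 2 ^ (16 * n) := by
  have hn : n ≤ 2 ^ n := Nat.le_of_lt n.lt_two_pow_self
  have h2 : n + 1 ≤ 2 ^ (n + 1) := Nat.le_of_lt (n + 1).lt_two_pow_self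
  have h1 : n ^ 2 ≤ 2 ^ n * 2 ^ n := by rw [sq]; exact Nat.mul_le_mul hn hn
  have h3 : (n + 1) ^ 2 ≤ 2 ^ (n + 1) * 2 ^ (n + 1) := by
    rw [sq]; exact Nat.mul_le_mul h2 h2
  show csize n ≤ 16 * 2 ^ (16 * n)
  calc csize n = 2 * n ^ 2 + (n + 1) ^ 2 * 2 ^ n := rfl
    _ ≤ 2 * (2 ^ n * 2 ^ n) + (2 ^ (n + 1) * 2 ^ (n + 1)) * 2 ^ n :=
        Nat.add_le_add (Nat.mul_le_mul_left 2 h1) (Nat.mul_le_mul_right _ h3)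
    _ = 2 ^ (2 * n + 1) + 2 ^ (3 * n + 2) := by ring
    _ ≤ 2 ^ (3 * n + 2) + 2 ^ (3 * n + 2) :=
        Nat.add_le_add_right (Nat.pow_le_pow_right (by norm_num) (by omega)) _
    _ = 2 ^ (3 * n + 3) := by ring
    _ ≤ 2 ^ (16 * n + 4) := Nat.pow_le_pow_right (by norm_num) (by omega)
    _ = 16 * 2 ^ (16 * n) := by ring

end LinDNNF

/-- there is a constant `c` such that for each `n` there is a
DNNF circuit with at most `c · 2^{c·n}` nodes (i.e. of size `2^{O(n)}`) over
the variables `x_{i,j}` (`i < j`) whose satisfying assignments are exactly the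
models of `lin_n`. -/
theorem dnnf_for_lin_exponential_size :
    ∃ c : ℕ, 0 < c ∧ ∀ n : ℕ, ∃ C : Circuit (Vars n),
      C.Decomposable ∧
      (∀ α : Vars n → Bool, C.eval α C.root = true ↔ satLin n α) ∧
      C.size ≤ c * 2 ^ (c * n) := by
  refine ⟨16, by norm_num, fun n => ⟨LinDNNF.C n, LinDNNF.C_decomposable n,
    LinDNNF.C_correct n, LinDNNF.C_size n⟩⟩
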